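/- Suppose char F = 0 or char F = p > d, and |F| ≥ 2d−1. Then any 2d−1 distinct tangent lines ℓ_{t₁},…,ℓ_{t_{2d−1}} of the moment curve in PG(d,F) constitute a generator set with respect to hyperplanes. -/

import Mathlib

open Polynomial

section Aux

variable {F : Type*} [Field F] {d : ℕ}

/-- A polynomial of degree ≤ d with zero derivative is constant (char condition). -/
lemma aux_deriv_zero_const (hd : ∀ i : ℕ, 0 < i → i ≤ d → (i : F) ≠ 0)
    {A : F[X]} (hA : A.natDegree ≤ d) (h : derivative A = 0) : A = C (A.coeff 0) := by
  ext n
  cases n with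
  | zero => simp
  | succ m =>
    have h2 : A.coeff (m + 1) * ((m : F) + 1) = 0 := by
      have := congrArg (fun q : F[X] => q.coeff m) h
      simpa [coeff_derivative] using this
    rcases mul_eq_zero.mp h2 with h3 | h3
    · simp [h3]
    · by_cases hmd : m + 1 ≤ d
      · exact absurd (by exact_mod_cast h3) (hd (m + 1) (Nat.succ_pos m) hmd)
      · rw [coeff_C]
        simp only [Nat.succ_ne_zero, if_false]
        exact A.coeff_eq_zero_of_natDegree_lt (by omega)

/-- Wronskian identically zero implies linear dependence (for degrees below the char). -/
lemma aux_wronskian_dep (hd : ∀ i : ℕ, 0 < i → i ≤ d → (i : F) ≠ 0)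
    {P Q : F[X]} (hP : P.natDegree ≤ d) (hQ : Q.natDegree ≤ d)
    (hw : wronskian P Q = 0) :
    ∃ α β : F, (α ≠ 0 ∨ β ≠ 0) ∧ α • P + β • Q = 0 := by
  classical
  by_cases hP0 : P = 0
  · exact ⟨1, 0, Or.inl one_ne_zero, by simp [hP0]⟩
  by_cases hQ0 : Q = 0
  · exact ⟨0, 1, Or.inr one_ne_zero, by simp [hQ0]⟩
  set D := EuclideanDomain.gcd P Q with hDdef
  have hD0 : D ≠ 0 := fun h => hP0 (EuclideanDomain.gcd_eq_zero_iff.mp h).1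
  set P₁ := P / D with hP₁def
  set Q₁ := Q / D with hQ₁def
  have hPe : D * P₁ = P := EuclideanDomain.mul_div_cancel' hD0 (EuclideanDomain.gcd_dvd_left _ _)
  have hQe : D * Q₁ = Q := EuclideanDomain.mul_div_cancel' hD0 (EuclideanDomain.gcd_dvd_right _ _)
  -- coprimality via Bezout
  have hbez : D = P * EuclideanDomain.gcdA P Q + Q * EuclideanDomain.gcdB P Q :=
    EuclideanDomain.gcd_eq_gcd_ab P Q
  have hcop : IsCoprime P₁ Q₁ := by
    refine ⟨EuclideanDomain.gcdA P Q, EuclideanDomain.gcdB P Q, ?_⟩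
    have h1 : D * (EuclideanDomain.gcdA P Q * P₁ + EuclideanDomain.gcdB P Q * Q₁)
        = EuclideanDomain.gcdA P Q * (D * P₁) + EuclideanDomain.gcdB P Q * (D * Q₁) := by ring
    have h2 : D * (EuclideanDomain.gcdA P Q * P₁ + EuclideanDomain.gcdB P Q * Q₁) = D * 1 := by
      rw [h1, hPe, hQe, mul_one, hbez]; ring
    exact mul_left_cancel₀ hD0 h2
  have hw1 : D ^ 2 * wronskian P₁ Q₁ = 0 := by
    rw [← hw, ← hPe, ← hQe]
    simp only [wronskian, derivative_mul]
    ring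
  have hw2 : wronskian P₁ Q₁ = 0 := by
    rcases mul_eq_zero.mp hw1 with h | h
    · exact absurd h (pow_ne_zero 2 hD0)
    · exact h
  obtain ⟨hp1, hq1⟩ := hcop.wronskian_eq_zero_iff.mp hw2
  have hP₁0 : P₁ ≠ 0 := fun h => hP0 (by rw [← hPe, h, mul_zero])
  have hQ₁0 : Q₁ ≠ 0 := fun h => hQ0 (by rw [← hQe, h, mul_zero])
  have hP₁d : P₁.natDegree ≤ d :=
    le_trans (Polynomial.natDegree_le_of_dvd ⟨D, by rw [← hPe]; ring⟩ hP0) hP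
  have hQ₁d : Q₁.natDegree ≤ d :=
    le_trans (Polynomial.natDegree_le_of_dvd ⟨D, by rw [← hQe]; ring⟩ hQ0) hQ
  have hPc : P₁ = C (P₁.coeff 0) := aux_deriv_zero_const hd hP₁d hp1
  have hQc : Q₁ = C (Q₁.coeff 0) := aux_deriv_zero_const hd hQ₁d hq1
  have hc0 : P₁.coeff 0 ≠ 0 := fun h => hP₁0 (by rw [hPc, h, map_zero])
  refine ⟨Q₁.coeff 0, -(P₁.coeff 0), Or.inr (neg_ne_zero.mpr hc0), ?_⟩
  rw [← hPe, ← hQe]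
  nth_rewrite 1 [hPc]
  nth_rewrite 2 [hQc]
  simp [Polynomial.smul_eq_C_mul]
  ring

/-- Degree bound when the first argument has degree ≤ d - 1. -/
lemma aux_wronskian_deg₁ (hd : 1 ≤ d) {A B : F[X]}
    (hA : A.natDegree ≤ d - 1) (hB : B.natDegree ≤ d) :
    (wronskian A B).degree < ((2 * d - 1 : ℕ) : WithBot ℕ) := by
  rcases eq_or_ne A 0 with rfl | hA0
  · simp only [wronskian_zero_left, degree_zero]
    exact_mod_cast WithBot.bot_lt_coe _
  rcases eq_or_ne B 0 with rfl | hB0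
  · simp only [wronskian_zero_right, degree_zero]
    exact_mod_cast WithBot.bot_lt_coe _
  calc (wronskian A B).degree < A.degree + B.degree := degree_wronskian_lt_add hA0 hB0
    _ ≤ ((d - 1 : ℕ) : WithBot ℕ) + ((d : ℕ) : WithBot ℕ) := by
        exact add_le_add (le_trans degree_le_natDegree (by exact_mod_cast hA))
          (le_trans degree_le_natDegree (by exact_mod_cast hB))
    _ = ((2 * d - 1 : ℕ) : WithBot ℕ) := by
        rw [← Nat.cast_add]
        congr 1
        omega

lemma aux_coeff_top_zero {B : F[X]} (hB : B.natDegree ≤ d) (h : B.coeff d = 0) :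
    B.natDegree ≤ d - 1 := by
  rcases eq_or_ne B 0 with rfl | hB0
  · simp
  have : B.natDegree ≠ d := by
    intro hdd
    exact hB0 (leadingCoeff_eq_zero.mp (by rw [leadingCoeff, hdd]; exact h))
  omega

/-- The main degree bound for Wronskians of two polynomials of degree ≤ d. -/
lemma aux_wronskian_deg (hd : 1 ≤ d) {P Q : F[X]}
    (hP : P.natDegree ≤ d) (hQ : Q.natDegree ≤ d) :
    (wronskian P Q).degree < ((2 * d - 1 : ℕ) : WithBot ℕ) := by
  by_cases hQd : Q.coeff d = 0
  · have := aux_wronskian_deg₁ hd (aux_coeff_top_zero hQ hQd) hP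
    rwa [← wronskian_neg_eq, degree_neg] at this
  · set a := P.coeff d / Q.coeff d with ha
    have key : wronskian P Q = wronskian (P - C a * Q) Q := by
      simp only [wronskian, derivative_sub, derivative_C_mul]
      ring
    have h1 : (P - C a * Q).natDegree ≤ d :=
      le_trans (natDegree_sub_le _ _) (max_le hP (le_trans (natDegree_C_mul_le _ _) hQ))
    have h2 : (P - C a * Q).coeff d = 0 := by
      simp only [coeff_sub, coeff_C_mul, ha]
      rw [div_mul_cancel₀ _ hQd]
      ring
    rw [key]
    exact aux_wronskian_deg₁ hd (aux_coeff_top_zero h1 h2) hQ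

end Aux

/-- The tangent line of the moment curve `t ↦ (1, t, …, t^d)` at parameter `t`, i.e. the
line spanned by `a(t) = (1, t, …, t^d)` and `ȧ(t) = (0, 1, 2t, …, d t^{d-1})`. -/
def momentTangent (F : Type*) [Field F] (d : ℕ) (t : F) :
    Submodule F (Fin (d + 1) → F) :=
  Submodule.span F
    {fun i : Fin (d + 1) => t ^ (i : ℕ), fun i : Fin (d + 1) => ((i : ℕ) : F) * t ^ ((i : ℕ) - 1)}

/-- If `char F = 0` or `char F = p > d`, and `|F| ≥ 2d - 1`, then any `2d - 1` distinct
tangent lines of the moment curve form a generator set with respect to hyperplanes: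
every hyperplane is spanned by its intersections with these lines. -/
theorem moment_tangents_generator (F : Type*) [Field F] (d : ℕ)
    (hchar : CharP F 0 ∨ ∃ p : ℕ, p.Prime ∧ CharP F p ∧ d < p)
    (hF : ((2 * d - 1 : ℕ) : Cardinal) ≤ Cardinal.mk F)
    (t : Fin (2 * d - 1) → F) (ht : Function.Injective t) :
    ∀ Pl : Submodule F (Fin (d + 1) → F), Module.finrank F Pl = d →
      Submodule.span F
        (⋃ k : Fin (2 * d - 1),
          ((momentTangent F d (t k) : Set (Fin (d + 1) → F)) ∩ (Pl : Set (Fin (d + 1) → F)))) = Pl := by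
  classical
  intro Pl hPl
  -- trivial case d = 0
  rcases Nat.eq_zero_or_pos d with rfl | hd1
  · have hbot : Pl = ⊥ := Submodule.finrank_eq_zero.mp hPl
    subst hbot
    simp
  -- the chararacteristic condition
  have hdchar : ∀ i : ℕ, 0 < i → i ≤ d → (i : F) ≠ 0 := by
    intro i hi hid
    rcases hchar with h0 | ⟨p, hp, hcp, hdp⟩
    · haveI : CharZero F := CharP.charP_to_charZero F
      exact_mod_cast Nat.cast_ne_zero.mpr (by omega)
    · intro hz
      have := (CharP.cast_eq_zero_iff F p i).mp hz
      have := Nat.le_of_dvd hi this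
      omega
  set S := Submodule.span F
        (⋃ k : Fin (2 * d - 1),
          ((momentTangent F d (t k) : Set (Fin (d + 1) → F)) ∩ (Pl : Set (Fin (d + 1) → F)))) with hSdef
  have hS : S ≤ Pl :=
    Submodule.span_le.mpr (Set.iUnion_subset fun k => Set.inter_subset_right)
  by_contra hne
  have hlt : S < Pl := lt_of_le_of_ne hS hne
  have hrankS : Module.finrank F S < d := by
    have := Submodule.finrank_lt_finrank_of_lt hlt
    rwa [hPl] at this
  -- two independent functionals vanishing on S
  have hrankV : Module.finrank F (Fin (d + 1) → F) = d + 1 := Module.finrank_fin_fun F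
  have hrankAnn : 2 ≤ Module.finrank F S.dualAnnihilator := by
    have h1 := LinearEquiv.finrank_eq (R := F) (M := (Fin (d + 1) → F) ⧸ S)
      (N := S.dualAnnihilator) (Subspace.quotEquivAnnihilator S)
    have h2 := S.finrank_quotient_add_finrank
    omega
  obtain ⟨b, hb⟩ := exists_linearIndependent_of_le_finrank hrankAnn
  have hbmap : LinearIndependent F (fun i : Fin 2 => (b i : Module.Dual F (Fin (d + 1) → F))) :=
    hb.map_injOn S.dualAnnihilator.subtype Subtype.val_injective.injOn
  set f := (b 0 : Module.Dual F (Fin (d + 1) → F)) with hfdef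
  set g := (b 1 : Module.Dual F (Fin (d + 1) → F)) with hgdef
  have hfS : ∀ v ∈ S, f v = 0 := fun v hv => (Submodule.mem_dualAnnihilator f).mp (b 0).2 v hv
  have hgS : ∀ v ∈ S, g v = 0 := fun v hv => (Submodule.mem_dualAnnihilator g).mp (b 1).2 v hv
  -- the polynomials associated to functionals
  have hsingle : ∀ i : Fin (d + 1),
      (fun j : Fin (d + 1) => if i = j then (1 : F) else 0) = Pi.single i 1 := by
    intro i; funext j; simp [Pi.single_apply, eq_comm]
  set poly : Module.Dual F (Fin (d + 1) → F) → F[X] :=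
    fun φ => ∑ i : Fin (d + 1), C (φ (Pi.single i 1)) * X ^ (i : ℕ) with hpolydef
  have hdeg : ∀ φ, (poly φ).natDegree ≤ d := by
    intro φ
    refine Polynomial.natDegree_sum_le_of_forall_le _ _ fun i _ => ?_
    refine le_trans (natDegree_C_mul_le _ _) ?_
    simpa using Nat.lt_succ_iff.mp i.2
  have heval : ∀ φ (τ : F), (poly φ).eval τ = φ (fun i : Fin (d + 1) => τ ^ (i : ℕ)) := by
    intro φ τ
    rw [LinearMap.pi_apply_eq_sum_univ φ]
    simp only [hpolydef, eval_finset_sum, eval_mul, eval_C, eval_pow, eval_X]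
    refine Finset.sum_congr rfl fun i _ => ?_
    rw [hsingle i, smul_eq_mul, mul_comm]
  have hdeval : ∀ φ (τ : F), ((poly φ).derivative).eval τ
      = φ (fun i : Fin (d + 1) => ((i : ℕ) : F) * τ ^ ((i : ℕ) - 1)) := by
    intro φ τ
    rw [LinearMap.pi_apply_eq_sum_univ φ]
    simp only [hpolydef, derivative_sum, derivative_C_mul_X_pow, eval_finset_sum,
      eval_mul, eval_C, eval_pow, eval_X]
    refine Finset.sum_congr rfl fun i _ => ?_
    rw [hsingle i, smul_eq_mul]
    ring
  have hcoeff : ∀ φ (i : Fin (d + 1)), (poly φ).coeff (i : ℕ) = φ (Pi.single i 1) := by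
    intro φ i
    rw [hpolydef]
    simp only [finset_sum_coeff, coeff_C_mul, coeff_X_pow]
    rw [Finset.sum_eq_single i]
    · simp
    · intro j _ hj
      rw [if_neg, mul_zero]
      exact fun h => hj (Fin.val_injective h.symm)
    · intro h; exact absurd (Finset.mem_univ i) h
  set P := poly f with hPdef
  set Q := poly g with hQdef
  -- the wronskian vanishes at each t k
  have hwk : ∀ k : Fin (2 * d - 1), (wronskian P Q).eval (t k) = 0 := by
    intro k
    set τ := t k with hτdef
    set av : Fin (d + 1) → F := fun i => τ ^ (i : ℕ) with havdef
    set dv : Fin (d + 1) → F := fun i => ((i : ℕ) : F) * τ ^ ((i : ℕ) - 1) with hdvdef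
    set ℓ := momentTangent F d τ with hldef
    have hav : av ∈ ℓ := Submodule.subset_span (Set.mem_insert _ _)
    have hdv : dv ∈ ℓ := Submodule.subset_span (Set.mem_insert_of_mem _ rfl)
    -- av and dv are linearly independent
    have hind : LinearIndependent F ![av, dv] := by
      rw [LinearIndependent.pair_iff]
      intro s₁ s₂ hs
      have h0 := congrFun hs (0 : Fin (d + 1))
      have h1 := congrFun hs (⟨1, by omega⟩ : Fin (d + 1))
      simp only [havdef, hdvdef, Pi.add_apply, Pi.smul_apply, smul_eq_mul, Pi.zero_apply] at h0 h1
      norm_num at h0 h1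
      constructor
      · exact h0
      · rw [h0] at h1; simpa using h1
    -- the tangent line has rank ≥ 2
    have hrankl : 2 ≤ Module.finrank F ℓ := by
      have : LinearIndependent F (fun i : Fin 2 => (![(⟨av, hav⟩ : ℓ), ⟨dv, hdv⟩] i : ℓ)) := by
        apply LinearIndependent.of_comp ℓ.subtype
        have hcomp : (ℓ.subtype ∘ fun i : Fin 2 => (![(⟨av, hav⟩ : ℓ), ⟨dv, hdv⟩] i)) = ![av, dv] := by
          funext i
          fin_cases i <;> rfl
        rw [hcomp]
        exact hind
      simpa using this.fintype_card_le_finrank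
    -- the tangent line meets Pl nontrivially
    have hinf : ℓ ⊓ Pl ≠ ⊥ := by
      intro hbot
      have h1 := Submodule.finrank_sup_add_finrank_inf_eq ℓ Pl
      have h2 := Submodule.finrank_le (ℓ ⊔ Pl)
      rw [hrankV] at h2
      rw [hbot] at h1
      rw [finrank_bot, hPl] at h1
      omega
    obtain ⟨v, hv, hv0⟩ := (Submodule.ne_bot_iff _).mp hinf
    obtain ⟨m, n, hmn⟩ := Submodule.mem_span_pair.mp (Submodule.mem_inf.mp hv).1
    have hvS : v ∈ S := by
      apply Submodule.subset_span
      exact Set.mem_iUnion.mpr ⟨k, ⟨(Submodule.mem_inf.mp hv).1, (Submodule.mem_inf.mp hv).2⟩⟩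
    have hmn0 : m ≠ 0 ∨ n ≠ 0 := by
      by_contra h
      push_neg at h
      apply hv0
      rw [← hmn, h.1, h.2]
      simp
    have hfv : m * P.eval τ + n * P.derivative.eval τ = 0 := by
      rw [heval, hdeval]
      have : f v = 0 := hfS v hvS
      rw [← hmn] at this
      simpa [map_add, map_smul, smul_eq_mul] using this
    have hgv : m * Q.eval τ + n * Q.derivative.eval τ = 0 := by
      rw [heval, hdeval]
      have : g v = 0 := hgS v hvS
      rw [← hmn] at this
      simpa [map_add, map_smul, smul_eq_mul] using this
    have hwform : (wronskian P Q).eval τ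
        = P.eval τ * Q.derivative.eval τ - P.derivative.eval τ * Q.eval τ := by
      simp [wronskian, eval_sub, eval_mul]
    rw [hwform]
    rcases hmn0 with hm | hn
    · have key : m * (P.eval τ * Q.derivative.eval τ - P.derivative.eval τ * Q.eval τ) = 0 := by
        linear_combination Q.derivative.eval τ * hfv - P.derivative.eval τ * hgv
      exact (mul_eq_zero.mp key).resolve_left hm
    · have key : n * (P.eval τ * Q.derivative.eval τ - P.derivative.eval τ * Q.eval τ) = 0 := by
        linear_combination P.eval τ * hgv - Q.eval τ * hfv
      exact (mul_eq_zero.mp key).resolve_left hn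
  -- hence the wronskian is identically zero
  have hW : wronskian P Q = 0 := by
    by_contra hW0
    apply hW0
    refine eq_zero_of_natDegree_lt_card_of_eval_eq_zero _ ht hwk ?_
    rw [Fintype.card_fin]
    exact (natDegree_lt_iff_degree_lt hW0).mpr (aux_wronskian_deg hd1 (hdeg f) (hdeg g))
  -- linear dependence of P and Q, hence of f and g
  obtain ⟨α, β, hab0, hab⟩ := aux_wronskian_dep hdchar (hdeg f) (hdeg g) hW
  have hfg : α • f + β • g = 0 := by
    have hz : ∀ i : Fin (d + 1), α * f (Pi.single i 1) + β * g (Pi.single i 1) = 0 := by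
      intro i
      have := congrArg (fun p : F[X] => p.coeff (i : ℕ)) hab
      simpa [coeff_add, coeff_smul, smul_eq_mul, hcoeff] using this
    apply LinearMap.ext
    intro x
    rw [LinearMap.pi_apply_eq_sum_univ (α • f + β • g) x]
    simp only [LinearMap.add_apply, LinearMap.smul_apply, smul_eq_mul, LinearMap.zero_apply]
    refine Finset.sum_eq_zero fun i _ => ?_
    rw [hsingle i, hz i, mul_zero]
  have := Fintype.linearIndependent_iff.mp hbmap ![α, β] (by
    simpa [Fin.sum_univ_two] using hfg)
  rcases hab0 with h | h
  · exact h (by simpa using this 0)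
  · exact h (by simpa using this 1)
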